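/- Let 𝔮 be a probability measure on a measurable space (Ω,Σ), let h : Ω → (0,∞) be measurable, and let p, q > 0 be real exponents with ∫ h^q d𝔮 < ∞ and ∫ h^{−p} d𝔮 < ∞. Set λ := 𝔮({h ≥ 1}) and assume 0 < λ < 1. Then for every δ > 0 the Luxemburg norm of log h with respect to the Young function θ(t) = e^t − 1 satisfies ‖log h‖_θ ≤ max( 1/min(δ,p,q), (1/δ)·log₂( λ^{1−δ/q}·‖h‖_{L^q(𝔮)}^δ + (1−λ)^{1−δ/p}·‖h^{−1}‖_{L^p(𝔮)}^δ ) ). -/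

import Mathlib

open MeasureTheory Real

lemma jensen_rpow {Ω : Type*} [MeasurableSpace Ω] (μ : Measure Ω) [IsProbabilityMeasure μ]
    (f : Ω → ℝ) (hnn : ∀ x, 0 ≤ f x) {s r : ℝ} (hs : 0 < s) (hsr : s ≤ r)
    (hfs : Integrable (fun x => f x ^ s) μ) (hfr : Integrable (fun x => f x ^ r) μ) :
    ∫ x, f x ^ s ∂μ ≤ (∫ x, f x ^ r ∂μ) ^ (s / r) := by
  have hr : 0 < r := hs.trans_le hsr
  have heq : ∀ x, (f x ^ r) ^ (s / r) = f x ^ s := by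
    intro x
    rw [← Real.rpow_mul (hnn x)]
    congr 1
    field_simp
  have hconc : ConcaveOn ℝ (Set.Ici 0) fun t : ℝ => t ^ (s / r) :=
    Real.concaveOn_rpow (by positivity) (by rw [div_le_one hr]; exact hsr)
  have hcont : ContinuousOn (fun t : ℝ => t ^ (s / r)) (Set.Ici 0) := fun x _ =>
    (Real.continuousAt_rpow_const x _ (Or.inr (by positivity))).continuousWithinAt
  have key := hconc.le_map_integral hcont isClosed_Ici
      (Filter.Eventually.of_forall fun x => Real.rpow_nonneg (hnn x) r) hfr
      (hfs.congr (Filter.Eventually.of_forall fun x => (heq x).symm))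
  calc ∫ x, f x ^ s ∂μ = ∫ x, (f x ^ r) ^ (s/r) ∂μ := by simp_rw [heq]
    _ ≤ _ := key

open ProbabilityTheory in
lemma holder_set {Ω : Type*} [MeasurableSpace Ω] (μ : Measure Ω) [IsProbabilityMeasure μ]
    {A : Set Ω} (hA0 : μ A ≠ 0)
    (f : Ω → ℝ) (hnn : ∀ x, 0 ≤ f x) {s r : ℝ} (hs : 0 < s) (hsr : s ≤ r)
    (hfs : Integrable (fun x => f x ^ s) μ) (hfr : Integrable (fun x => f x ^ r) μ) :
    ∫ x in A, f x ^ s ∂μ ≤ (μ A).toReal ^ (1 - s / r) * (∫ x, f x ^ r ∂μ) ^ (s / r) := by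
  have hr : 0 < r := hs.trans_le hsr
  have hAt : μ A ≠ ⊤ := measure_ne_top μ A
  set lam := (μ A).toReal with hlamdef
  have hlam : 0 < lam := ENNReal.toReal_pos hA0 hAt
  have hinv : ((μ A)⁻¹).toReal = lam⁻¹ := by rw [ENNReal.toReal_inv]
  have : IsProbabilityMeasure (μ[|A]) := cond_isProbabilityMeasure hA0
  have hint : ∀ (t : ℝ), Integrable (fun x => f x ^ t) μ →
      Integrable (fun x => f x ^ t) (μ[|A]) := fun t ht =>
    (ht.restrict (s := A)).smul_measure (ENNReal.inv_ne_top.mpr hA0)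
  have key := jensen_rpow (μ[|A]) f hnn hs hsr (hint s hfs) (hint r hfr)
  rw [ProbabilityTheory.cond, integral_smul_measure, integral_smul_measure, hinv, smul_eq_mul, smul_eq_mul] at key
  have hsub : ∫ x in A, f x ^ r ∂μ ≤ ∫ x, f x ^ r ∂μ :=
    setIntegral_le_integral hfr (Filter.Eventually.of_forall fun x => Real.rpow_nonneg (hnn x) r)
  have hIr : (0:ℝ) ≤ ∫ x, f x ^ r ∂μ :=
    integral_nonneg fun x => Real.rpow_nonneg (hnn x) r
  have h2 : (lam⁻¹ * ∫ x in A, f x ^ r ∂μ) ^ (s / r) ≤ (lam⁻¹ * ∫ x, f x ^ r ∂μ) ^ (s / r) := by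
    apply Real.rpow_le_rpow _ (mul_le_mul_of_nonneg_left hsub (by positivity)) (by positivity)
    have : (0:ℝ) ≤ ∫ x in A, f x ^ r ∂μ := integral_nonneg fun x => Real.rpow_nonneg (hnn x) r
    positivity
  have hfinal : lam ^ (1 - s/r) = lam * (lam⁻¹) ^ (s/r) := by
    rw [Real.inv_rpow hlam.le, Real.rpow_sub hlam, Real.rpow_one, div_eq_mul_inv]
  calc ∫ x in A, f x ^ s ∂μ = lam * (lam⁻¹ * ∫ x in A, f x ^ s ∂μ) := by
        field_simp
    _ ≤ lam * ((lam⁻¹ * ∫ x, f x ^ r ∂μ) ^ (s / r)) :=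
        mul_le_mul_of_nonneg_left (key.trans h2) hlam.le
    _ = lam * ((lam⁻¹) ^ (s/r) * (∫ x, f x ^ r ∂μ) ^ (s/r)) := by
        rw [Real.mul_rpow (by positivity) hIr]
    _ = lam ^ (1 - s/r) * (∫ x, f x ^ r ∂μ) ^ (s/r) := by rw [hfinal]; ring

lemma two_point_mean {w₁ w₂ c₁ c₂ : ℝ} (hw₁ : 0 ≤ w₁) (hw₂ : 0 ≤ w₂) (hw : w₁ + w₂ = 1)
    (hc₁ : 0 ≤ c₁) (hc₂ : 0 ≤ c₂) {z : ℝ} (hz : 1 ≤ z) :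
    w₁ * c₁ + w₂ * c₂ ≤ (w₁ * c₁ ^ z + w₂ * c₂ ^ z) ^ (1 / z) := by
  have := Real.arith_mean_le_rpow_mean (Finset.univ : Finset (Fin 2)) ![w₁, w₂] ![c₁, c₂]
    (by intro i _; fin_cases i <;> simpa) (by simp [Fin.sum_univ_two, hw])
    (by intro i _; fin_cases i <;> simpa) hz
  simpa [Fin.sum_univ_two] using this

lemma exp_id {I t r : ℝ} (hI : 0 ≤ I) : (I ^ (1/r)) ^ t = I ^ (t/r) := by
  rw [← Real.rpow_mul hI]; congr 1; ring

lemma weight_id {w I t r : ℝ} (hw : 0 < w) (hI : 0 ≤ I) :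
    w * ((I / w) ^ (1/r)) ^ t = w ^ (1 - t/r) * I ^ (t/r) := by
  rw [Real.div_rpow hI hw.le,
    Real.div_rpow (Real.rpow_nonneg hI _) (Real.rpow_nonneg hw.le _),
    exp_id hI, exp_id hw.le, Real.rpow_sub hw, Real.rpow_one]
  ring

set_option maxHeartbeats 1000000 in
/-- eq. (delta:norm): bound on the Luxemburg norm of `log h`
with respect to the Young function `θ(t) = e^t - 1`, for a positive measurable
function `h` with `h ∈ L^q(𝔮)`, `h⁻¹ ∈ L^p(𝔮)` and `λ := 𝔮({h ≥ 1}) ∈ (0,1)`: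
for every `δ > 0`,
`‖log h‖_θ ≤ max(1/min(δ,p,q), (1/δ) log₂(λ^{1-δ/q} ‖h‖_q^δ + (1-λ)^{1-δ/p} ‖h⁻¹‖_p^δ))`. -/
theorem luxemburg_norm_log_bound
    {Ω : Type*} [MeasurableSpace Ω]
    (𝔮 : Measure Ω) [IsProbabilityMeasure 𝔮]
    (h : Ω → ℝ) (hmeas : Measurable h) (hpos : ∀ x, 0 < h x)
    (p q : ℝ) (hp : 0 < p) (hq : 0 < q)
    (hhq : Integrable (fun x => h x ^ q) 𝔮)
    (hhp : Integrable (fun x => h x ^ (-p)) 𝔮)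
    (hlam0 : 0 < 𝔮 {x | 1 ≤ h x}) (hlam1 : 𝔮 {x | 1 ≤ h x} < 1)
    (δ : ℝ) (hδ : 0 < δ) :
    sInf {b : ℝ | 0 < b ∧ ∫ x, (Real.exp (|Real.log (h x)| / b) - 1) ∂𝔮 ≤ 1} ≤
      max (1 / min δ (min p q))
        ((1 / δ) * Real.logb 2
          ((𝔮 {x | 1 ≤ h x}).toReal ^ (1 - δ / q) * ((∫ x, h x ^ q ∂𝔮) ^ (1 / q)) ^ δ
            + (1 - (𝔮 {x | 1 ≤ h x}).toReal) ^ (1 - δ / p)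
                * ((∫ x, h x ^ (-p) ∂𝔮) ^ (1 / p)) ^ δ)) := by
  set A : Set Ω := {x | 1 ≤ h x} with hAdef
  have hA : MeasurableSet A := measurableSet_le measurable_const hmeas
  set lam := (𝔮 A).toReal with hlamdef
  have hA0 : 𝔮 A ≠ 0 := hlam0.ne'
  have hAt : 𝔮 A ≠ ⊤ := measure_ne_top _ _
  have hlampos : 0 < lam := ENNReal.toReal_pos hA0 hAt
  have hlamlt : lam < 1 := by
    rw [hlamdef, ← ENNReal.toReal_one]
    exact (ENNReal.toReal_lt_toReal hAt ENNReal.one_ne_top).mpr hlam1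
  have hAc0 : 𝔮 Aᶜ ≠ 0 := by
    rw [prob_compl_eq_one_sub hA, Ne, tsub_eq_zero_iff_le]
    exact hlam1.not_ge
  have hAcR : (𝔮 Aᶜ).toReal = 1 - lam := by
    rw [prob_compl_eq_one_sub hA,
      ENNReal.toReal_sub_of_le hlam1.le ENNReal.one_ne_top, ENNReal.toReal_one]
  set Iq := ∫ x, h x ^ q ∂𝔮 with hIqdef
  set Ip := ∫ x, h x ^ (-p) ∂𝔮 with hIpdef
  have hIq0 : 0 ≤ Iq := integral_nonneg fun x => Real.rpow_nonneg (hpos x).le q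
  have hIp0 : 0 ≤ Ip := integral_nonneg fun x => Real.rpow_nonneg (hpos x).le (-p)
  have hIq_ge : lam ≤ Iq := by
    have h1 : ∫ x in A, (1:ℝ) ∂𝔮 = lam := by simp; rfl
    have h2 : ∫ x in A, (1:ℝ) ∂𝔮 ≤ ∫ x in A, h x ^ q ∂𝔮 :=
      setIntegral_mono_on (integrable_const 1).integrableOn hhq.integrableOn hA
        (fun x hx => Real.one_le_rpow hx hq.le)
    have h3 : ∫ x in A, h x ^ q ∂𝔮 ≤ Iq :=
      setIntegral_le_integral hhq
        (Filter.Eventually.of_forall fun x => Real.rpow_nonneg (hpos x).le q)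
    linarith
  have hIp_ge : 1 - lam ≤ Ip := by
    have h1 : ∫ x in Aᶜ, (1:ℝ) ∂𝔮 = 1 - lam := by
      simp [hAcR]
      exact hAcR
    have h2 : ∫ x in Aᶜ, (1:ℝ) ∂𝔮 ≤ ∫ x in Aᶜ, h x ^ (-p) ∂𝔮 :=
      setIntegral_mono_on (integrable_const 1).integrableOn hhp.integrableOn hA.compl
        (fun x hx => Real.one_le_rpow_of_pos_of_le_one_of_nonpos (hpos x)
          (le_of_not_ge hx) (by linarith))
    have h3 : ∫ x in Aᶜ, h x ^ (-p) ∂𝔮 ≤ Ip :=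
      setIntegral_le_integral hhp
        (Filter.Eventually.of_forall fun x => Real.rpow_nonneg (hpos x).le (-p))
    linarith
  set m := min δ (min p q) with hmdef
  have hmpos : 0 < m := lt_min hδ (lt_min hp hq)
  set c₁ := (Iq / lam) ^ (1/q) with hc1def
  set c₂ := (Ip / (1 - lam)) ^ (1/p) with hc2def
  have hc₁0 : 0 ≤ c₁ := Real.rpow_nonneg (div_nonneg hIq0 hlampos.le) _
  have hc₂0 : 0 ≤ c₂ := Real.rpow_nonneg (div_nonneg hIp0 (by linarith)) _
  have hc₁1 : 1 ≤ c₁ :=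
    Real.one_le_rpow ((one_le_div hlampos).mpr hIq_ge) (by positivity)
  have hc₂1 : 1 ≤ c₂ :=
    Real.one_le_rpow ((one_le_div (by linarith)).mpr hIp_ge) (by positivity)
  set X := lam ^ (1 - δ/q) * Iq ^ (δ/q) + (1 - lam) ^ (1 - δ/p) * Ip ^ (δ/p) with hXdef
  have hXc : X = lam * c₁ ^ δ + (1 - lam) * c₂ ^ δ := by
    rw [hXdef, hc1def, hc2def, weight_id hlampos hIq0, weight_id (by linarith) hIp0]
  have hX1 : 1 ≤ X := by
    have t1 : lam * 1 ≤ lam * c₁ ^ δ :=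
      mul_le_mul_of_nonneg_left (Real.one_le_rpow hc₁1 hδ.le) hlampos.le
    have t2 : (1 - lam) * 1 ≤ (1 - lam) * c₂ ^ δ :=
      mul_le_mul_of_nonneg_left (Real.one_le_rpow hc₂1 hδ.le) (by linarith)
    rw [hXc]; linarith
  have hXpos : 0 < X := lt_of_lt_of_le one_pos hX1
  set B := (1/δ) * Real.logb 2 X with hBdef
  have hL0 : 0 ≤ Real.logb 2 X := Real.logb_nonneg one_lt_two hX1
  have hB0 : 0 ≤ B := mul_nonneg (by positivity) hL0
  set b₀ := max (1/m) B with hb0def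
  have hb₀ : 0 < b₀ := lt_of_lt_of_le (by positivity) (le_max_left _ _)
  set s := b₀⁻¹ with hsdef
  have hs : 0 < s := inv_pos.mpr hb₀
  have hsm : s ≤ m := by
    rw [hsdef]
    calc b₀⁻¹ ≤ (1/m)⁻¹ := by
          apply inv_anti₀ (by positivity) (le_max_left _ _)
      _ = m := by rw [one_div, inv_inv]
  have hsδ : s ≤ δ := hsm.trans (min_le_left _ _)
  have hsp : s ≤ p := hsm.trans ((min_le_right _ _).trans (min_le_left _ _))
  have hsq : s ≤ q := hsm.trans ((min_le_right _ _).trans (min_le_right _ _))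
  have hsB : Real.logb 2 X * (s/δ) ≤ 1 := by
    have h1 : B ≤ b₀ := le_max_right _ _
    have h2 : s * B ≤ s * b₀ := mul_le_mul_of_nonneg_left h1 hs.le
    have h3 : s * b₀ = 1 := inv_mul_cancel₀ hb₀.ne'
    have h4 : Real.logb 2 X * (s/δ) = s * B := by rw [hBdef]; ring
    rw [h4]; linarith
  -- integrability
  have hmono_s : ∀ x, h x ^ s ≤ 1 + h x ^ q := by
    intro x
    rcases le_or_gt 1 (h x) with hx | hx
    · have := Real.rpow_le_rpow_of_exponent_le hx hsq
      have h0 : (0:ℝ) ≤ 1 := one_pos.le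
      nlinarith [Real.rpow_nonneg (hpos x).le q]
    · have := Real.rpow_le_one (hpos x).le hx.le hs.le
      nlinarith [Real.rpow_nonneg (hpos x).le q]
  have hmono_ns : ∀ x, h x ^ (-s) ≤ 1 + h x ^ (-p) := by
    intro x
    rcases le_or_gt 1 (h x) with hx | hx
    · have := Real.rpow_le_one_of_one_le_of_nonpos hx (by linarith : -s ≤ 0)
      nlinarith [Real.rpow_nonneg (hpos x).le (-p)]
    · have := Real.rpow_le_rpow_of_exponent_ge (hpos x) hx.le (by linarith : -p ≤ -s)
      linarith
  have hrep : ∀ t : ℝ, (fun x => h x ^ t) = fun x => Real.exp (Real.log (h x) * t) :=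
    fun t => funext fun x => Real.rpow_def_of_pos (hpos x) t
  have hms : Measurable fun x => h x ^ s := by
    rw [hrep s]; exact (hmeas.log.mul_const s).exp
  have hmns : Measurable fun x => h x ^ (-s) := by
    rw [hrep (-s)]; exact (hmeas.log.mul_const (-s)).exp
  have hs_int : Integrable (fun x => h x ^ s) 𝔮 := by
    refine Integrable.mono' ((integrable_const 1).add hhq) hms.aestronglyMeasurable ?_
    refine Filter.Eventually.of_forall fun x => ?_
    rw [Real.norm_eq_abs, abs_of_nonneg (Real.rpow_nonneg (hpos x).le s)]
    exact hmono_s x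
  have hns_int : Integrable (fun x => h x ^ (-s)) 𝔮 := by
    refine Integrable.mono' ((integrable_const 1).add hhp) hmns.aestronglyMeasurable ?_
    refine Filter.Eventually.of_forall fun x => ?_
    rw [Real.norm_eq_abs, abs_of_nonneg (Real.rpow_nonneg (hpos x).le (-s))]
    exact hmono_ns x
  set G := fun x => Real.exp (|Real.log (h x)| * s) with hGdef
  have hGnn : ∀ x, 0 ≤ G x := fun x => (Real.exp_pos _).le
  have eA : ∀ x, 0 ≤ Real.log (h x) → G x = h x ^ s := by
    intro x hx
    simp only [hGdef]
    rw [abs_of_nonneg hx, Real.rpow_def_of_pos (hpos x)]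
  have eB : ∀ x, Real.log (h x) < 0 → G x = h x ^ (-s) := by
    intro x hx
    simp only [hGdef]
    rw [abs_of_neg hx, Real.rpow_def_of_pos (hpos x)]
    congr 1; ring
  have hGm : Measurable G := ((hmeas.log.abs).mul_const s).exp
  have hG_int : Integrable G 𝔮 := by
    refine Integrable.mono' (hs_int.add hns_int) hGm.aestronglyMeasurable ?_
    refine Filter.Eventually.of_forall fun x => ?_
    rw [Real.norm_eq_abs, abs_of_nonneg (hGnn x)]
    simp only [Pi.add_apply]
    rcases le_or_gt 0 (Real.log (h x)) with hx | hx
    · rw [eA x hx]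
      have := Real.rpow_nonneg (hpos x).le (-s); linarith
    · rw [eB x hx]
      have := Real.rpow_nonneg (hpos x).le s; linarith
  -- split and Hölder
  have hGA : ∫ x in A, G x ∂𝔮 = ∫ x in A, h x ^ s ∂𝔮 :=
    setIntegral_congr_fun hA fun x hx => eA x (Real.log_nonneg hx)
  have hGAc : ∫ x in Aᶜ, G x ∂𝔮 = ∫ x in Aᶜ, h x ^ (-s) ∂𝔮 :=
    setIntegral_congr_fun hA.compl fun x hx =>
      eB x (Real.log_neg (hpos x) (lt_of_not_ge hx))
  have heqinv : ∀ (t : ℝ) x, (h x)⁻¹ ^ t = h x ^ (-t) := by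
    intro t x
    rw [Real.inv_rpow (hpos x).le, ← Real.rpow_neg (hpos x).le]
  have hH1 : ∫ x in A, h x ^ s ∂𝔮 ≤ lam ^ (1 - s/q) * Iq ^ (s/q) :=
    holder_set 𝔮 hA0 h (fun x => (hpos x).le) hs hsq hs_int hhq
  have hH2 : ∫ x in Aᶜ, h x ^ (-s) ∂𝔮 ≤ (1 - lam) ^ (1 - s/p) * Ip ^ (s/p) := by
    have key := holder_set 𝔮 hAc0 (fun x => (h x)⁻¹)
      (fun x => inv_nonneg.mpr (hpos x).le) hs hsp
      (by simp_rw [heqinv]; exact hns_int) (by simp_rw [heqinv]; exact hhp)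
    simp_rw [heqinv, hAcR] at key
    exact key
  -- combine
  have hz : 1 ≤ δ / s := (one_le_div hs).mpr hsδ
  have hwm : lam * c₁ ^ s + (1 - lam) * c₂ ^ s ≤ X ^ (s/δ) := by
    have key := two_point_mean hlampos.le (by linarith : (0:ℝ) ≤ 1 - lam) (by ring)
      (Real.rpow_nonneg hc₁0 s) (Real.rpow_nonneg hc₂0 s) hz
    have e1 : (c₁ ^ s) ^ (δ/s) = c₁ ^ δ := by
      rw [← Real.rpow_mul hc₁0]; congr 1; field_simp
    have e2 : (c₂ ^ s) ^ (δ/s) = c₂ ^ δ := by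
      rw [← Real.rpow_mul hc₂0]; congr 1; field_simp
    have e3 : 1 / (δ/s) = s/δ := one_div_div _ _
    rw [e1, e2, e3, ← hXc] at key
    exact key
  have hG2 : ∫ x, G x ∂𝔮 ≤ 2 := by
    have hsplit : ∫ x, G x ∂𝔮 = (∫ x in A, G x ∂𝔮) + ∫ x in Aᶜ, G x ∂𝔮 :=
      (integral_add_compl hA hG_int).symm
    have hws : lam ^ (1 - s/q) * Iq ^ (s/q) = lam * c₁ ^ s := by
      rw [hc1def, weight_id hlampos hIq0]
    have hws2 : (1 - lam) ^ (1 - s/p) * Ip ^ (s/p) = (1 - lam) * c₂ ^ s := by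
      rw [hc2def, weight_id (by linarith) hIp0]
    have hX2 : X ^ (s/δ) ≤ 2 := by
      calc X ^ (s/δ) = (2 ^ Real.logb 2 X) ^ (s/δ) := by
            rw [Real.rpow_logb two_pos (by norm_num) hXpos]
        _ = 2 ^ (Real.logb 2 X * (s/δ)) := by
            rw [← Real.rpow_mul (by norm_num : (0:ℝ) ≤ 2)]
        _ ≤ 2 ^ (1:ℝ) := Real.rpow_le_rpow_of_exponent_le one_le_two hsB
        _ = 2 := Real.rpow_one 2
    calc ∫ x, G x ∂𝔮 = (∫ x in A, h x ^ s ∂𝔮) + ∫ x in Aᶜ, h x ^ (-s) ∂𝔮 := by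
          rw [hsplit, hGA, hGAc]
      _ ≤ lam ^ (1 - s/q) * Iq ^ (s/q) + (1 - lam) ^ (1 - s/p) * Ip ^ (s/p) :=
          add_le_add hH1 hH2
      _ = lam * c₁ ^ s + (1 - lam) * c₂ ^ s := by rw [hws, hws2]
      _ ≤ X ^ (s/δ) := hwm
      _ ≤ 2 := hX2
  -- conclude
  have hXgoal : lam ^ (1 - δ / q) * (Iq ^ (1/q)) ^ δ
      + (1 - lam) ^ (1 - δ / p) * (Ip ^ (1/p)) ^ δ = X := by
    rw [hXdef, exp_id hIq0, exp_id hIp0]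
  rw [hXgoal]
  apply csInf_le ⟨0, fun b hb => hb.1.le⟩
  refine ⟨hb₀, ?_⟩
  have hrw : ∀ x, Real.exp (|Real.log (h x)| / b₀) - 1 = G x - 1 := by
    intro x; rw [hGdef, div_eq_mul_inv]
  show ∫ x, (Real.exp (|Real.log (h x)| / b₀) - 1) ∂𝔮 ≤ 1
  simp_rw [hrw]
  rw [integral_sub hG_int (integrable_const 1), integral_const]
  simp only [Measure.real, measure_univ, ENNReal.toReal_one, smul_eq_mul, one_mul]
  linarith
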